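/- Let g = [[A,B],[-B,A]] be a unitary matrix (A+iB ∈ U(n)) viewed inside Sp(2n,ℝ), and suppose g·τ(g) = I, where τ(g) = I₋ g I₋. Then there exists δ ∈ U(n) (viewed in Sp(2n,ℝ)) such that g = τ(δ)·δ⁻¹. -/

import Mathlib

noncomputable section
open Matrix Complex

/-- 2n×2n real matrices in n×n block form. -/
abbrev SpMat (n : ℕ) := Matrix (Fin n ⊕ Fin n) (Fin n ⊕ Fin n) ℝ

/-- The standard symplectic form J = [[0,I],[-I,0]]. -/
def J (n : ℕ) : SpMat n := fromBlocks 0 1 (-1) 0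

/-- I₋ = diag(-Iₙ, Iₙ). -/
def Iminus (n : ℕ) : SpMat n := fromBlocks (-1) 0 0 1

/-- The real symplectic group Sp(2n,ℝ). -/
def Sp (n : ℕ) : Set (SpMat n) := {g | gᵀ * J n * g = J n}

/-- The involution τ(g) = I₋ g I₋. -/
def tau {n : ℕ} (g : SpMat n) : SpMat n := Iminus n * g * Iminus n

/-- If g ∈ U(n) ⊂ Sp(2n,ℝ) satisfies g·τ(g) = 1 then g = τ(δ)δ⁻¹ for some δ ∈ U(n). -/
theorem unitary_cocycle_trivial (n : ℕ) (A B : Matrix (Fin n) (Fin n) ℝ)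
    (hU : fromBlocks A B (-B) A ∈ Sp n)
    (hc : fromBlocks A B (-B) A * tau (fromBlocks A B (-B) A) = 1) :
    ∃ P Q : Matrix (Fin n) (Fin n) ℝ, fromBlocks P Q (-Q) P ∈ Sp n ∧
      fromBlocks A B (-B) A = tau (fromBlocks P Q (-Q) P) * (fromBlocks P Q (-Q) P)⁻¹ := by
  simp only [Sp, Set.mem_setOf_eq, _root_.J, Matrix.fromBlocks_transpose, Matrix.fromBlocks_multiply,
    Matrix.neg_mul, Matrix.mul_neg, Matrix.transpose_neg, mul_one, one_mul, mul_zero, zero_mul,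
    add_zero, zero_add, neg_neg, neg_zero] at hU
  have hcsave := hc
  simp only [tau, Iminus, Matrix.fromBlocks_multiply, Matrix.neg_mul, Matrix.mul_neg, mul_one,
    one_mul, mul_zero, zero_mul, add_zero, zero_add, neg_neg, neg_zero,
    ← Matrix.fromBlocks_one] at hc
  rw [Matrix.fromBlocks_inj] at hU hc
  obtain ⟨e1, e2, -, -⟩ := hU
  obtain ⟨h3, f2, -, -⟩ := hc
  -- basic real identities
  rw [← sub_eq_add_neg] at e1
  have h2 : Aᵀ * B = Bᵀ * A := (sub_eq_zero.mp e1).symm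
  have h1 : Aᵀ * A + Bᵀ * B = 1 := by rwa [add_comm] at e2
  rw [add_comm, ← sub_eq_add_neg] at f2
  have h4 : A * B = B * A := (sub_eq_zero.mp f2).symm
  have hAt : Aᵀ = A := by
    calc Aᵀ = Aᵀ * (A * A + B * B) := by rw [h3, mul_one]
    _ = Aᵀ * A * A + Aᵀ * B * B := by rw [mul_add, ← mul_assoc, ← mul_assoc]
    _ = Aᵀ * A * A + Bᵀ * A * B := by rw [h2]
    _ = Aᵀ * A * A + Bᵀ * (A * B) := by rw [mul_assoc Bᵀ]
    _ = Aᵀ * A * A + Bᵀ * (B * A) := by rw [h4]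
    _ = Aᵀ * A * A + Bᵀ * B * A := by rw [mul_assoc Bᵀ]
    _ = (Aᵀ * A + Bᵀ * B) * A := (add_mul _ _ _).symm
    _ = A := by rw [h1, one_mul]
  have hBt : Bᵀ = B := by
    calc Bᵀ = Bᵀ * (A * A + B * B) := by rw [h3, mul_one]
    _ = Bᵀ * A * A + Bᵀ * B * B := by rw [mul_add, ← mul_assoc, ← mul_assoc]
    _ = Aᵀ * B * A + Bᵀ * B * B := by rw [← h2]
    _ = Aᵀ * (B * A) + Bᵀ * B * B := by rw [mul_assoc Aᵀ]
    _ = Aᵀ * (A * B) + Bᵀ * B * B := by rw [← h4]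
    _ = Aᵀ * A * B + Bᵀ * B * B := by rw [← mul_assoc]
    _ = (Aᵀ * A + Bᵀ * B) * B := (add_mul _ _ _).symm
    _ = B := by rw [h1, one_mul]
  have hAA : A * A = 1 - B * B := eq_sub_of_add_eq h3
  -- complexification
  set φ : Matrix (Fin n) (Fin n) ℝ →+* Matrix (Fin n) (Fin n) ℂ :=
    (Complex.ofRealHom).mapMatrix with hφ
  set Ac : Matrix (Fin n) (Fin n) ℂ := A.map Complex.ofReal with hAc
  set Bc : Matrix (Fin n) (Fin n) ℂ := B.map Complex.ofReal with hBc
  have hφA : φ A = Ac := rfl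
  have hφB : φ B = Bc := rfl
  have h3c : Ac * Ac + Bc * Bc = 1 := by
    have := congrArg φ h3
    simpa [_root_.map_add, _root_.map_mul, _root_.map_one, hφA, hφB] using this
  have h4c : Ac * Bc = Bc * Ac := by
    have := congrArg φ h4
    simpa [_root_.map_mul, hφA, hφB] using this
  set Cbar : Matrix (Fin n) (Fin n) ℂ := Ac - Complex.I • Bc with hCbar
  set Cc : Matrix (Fin n) (Fin n) ℂ := Ac + Complex.I • Bc with hCc
  have hCcCbar : Cc * Cbar = 1 := by
    have hAAc : Ac * Ac = 1 - Bc * Bc := eq_sub_of_add_eq h3c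
    simp only [hCc, hCbar, mul_sub, add_mul, Matrix.mul_smul, Matrix.smul_mul, smul_smul,
      Complex.I_mul_I, hAAc, h4c]
    module
  -- choice of a good point on the circle
  obtain ⟨t, ht, hgood⟩ :
      ∃ t : ℝ, t ∈ Set.Ioo (0:ℝ) 1 ∧ Complex.exp (t * Complex.I) ∉ spectrum ℂ (-Cbar) := by
    have hfin : (spectrum ℂ (-Cbar)).Finite := Matrix.finite_spectrum _
    have hinj : Set.InjOn (fun t : ℝ => Complex.exp (t * Complex.I)) (Set.Ioo 0 1) := by
      intro a ha b hb hab
      simp only at hab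
      rw [Complex.exp_eq_exp_iff_exists_int] at hab
      obtain ⟨m, hm⟩ := hab
      have him : a = b + m * (2 * Real.pi) := by
        have := congrArg Complex.im hm
        simpa using this
      have hpi := Real.pi_gt_three
      rcases lt_trichotomy m 0 with hm0 | hm0 | hm0
      · have : (m : ℝ) ≤ -1 := by exact_mod_cast (by omega : m ≤ -1)
        nlinarith [ha.1, ha.2, hb.1, hb.2]
      · simp [hm0] at him; linarith [him]
      · have : (1 : ℝ) ≤ (m : ℝ) := by exact_mod_cast hm0
        nlinarith [ha.1, ha.2, hb.1, hb.2]
    have hIm : ((fun t : ℝ => Complex.exp (t * Complex.I)) '' Set.Ioo 0 1).Infinite :=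
      (Set.Ioo_infinite (by norm_num : (0:ℝ) < 1)).image hinj
    obtain ⟨u, hu1, hu2⟩ := (hIm.diff hfin).nonempty
    obtain ⟨t, ht, rfl⟩ := hu1
    exact ⟨t, ht, hu2⟩
  set u : ℂ := Complex.exp (t * Complex.I) with hu
  have huabs : ‖u‖ = 1 := Complex.norm_exp_ofReal_mul_I t
  have hudet : IsUnit (u • (1 : Matrix (Fin n) (Fin n) ℂ) + Cbar) := by
    rw [spectrum.notMem_iff] at hgood
    rwa [Algebra.algebraMap_eq_smul_one, sub_neg_eq_add] at hgood
  set z : ℂ := Complex.exp ((-(t/2) : ℝ) * Complex.I) with hz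
  have hz0 : z ≠ 0 := Complex.exp_ne_zero _
  have hzu : (starRingEnd ℂ) z = z * u := by
    rw [hz, hu, ← Complex.exp_conj, ← Complex.exp_add]
    congr 1
    simp only [_root_.map_mul, Complex.conj_I, Complex.conj_ofReal]
    push_cast
    ring
  set x : ℝ := z.re with hx
  set y : ℝ := z.im with hy
  have hzxy : (x : ℂ) + y * Complex.I = z := Complex.re_add_im z
  have hnorm : x * x + y * y = 1 := by
    have h := Complex.norm_exp_ofReal_mul_I (-(t/2))
    rw [← hz] at h
    have := Complex.normSq_eq_norm_sq z
    rw [h] at this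
    simpa [Complex.normSq_apply] using this
  -- scalar identities
  have hzc : (starRingEnd ℂ) z = (x : ℂ) - y * Complex.I := by
    rw [← hzxy, _root_.map_add, _root_.map_mul, Complex.conj_ofReal, Complex.conj_ofReal,
      Complex.conj_I]
    ring
  have s1 : z * (z * u) = ((x * x + y * y : ℝ) : ℂ) := by
    rw [← hzu, Complex.mul_conj, Complex.normSq_apply]
  have s2 : z * z + (z * u) * (z * u) = ((2 * (x * x - y * y) : ℝ) : ℂ) := by
    rw [← hzu, hzc, ← hzxy]
    push_cast
    ring_nf
    rw [Complex.I_sq]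
    ring
  have s3 : Complex.I * ((z * u) * (z * u) - z * z) = ((4 * (x * y) : ℝ) : ℂ) := by
    rw [← hzu, hzc, ← hzxy]
    push_cast
    ring_nf
    rw [Complex.I_sq]
    ring
  -- the real matrices
  set R : Matrix (Fin n) (Fin n) ℝ := x • (1 + A) + y • B with hR
  set S : Matrix (Fin n) (Fin n) ℝ := y • (A - 1) - x • B with hS
  set M : Matrix (Fin n) (Fin n) ℝ := R * R + S * S with hM
  have hMval : M = (2 * (x * x + y * y)) • 1 + (2 * (x * x - y * y)) • A + (4 * (x * y)) • B := by
    simp only [hM, hR, hS, add_mul, mul_add, sub_mul, mul_sub, Matrix.smul_mul, Matrix.mul_smul,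
      smul_smul, mul_one, one_mul, hAA]
    module
  have hRS : R * S = S * R := by
    simp only [hR, hS, add_mul, mul_add, sub_mul, mul_sub, Matrix.smul_mul, Matrix.mul_smul,
      smul_smul, mul_one, one_mul, h4]
    module
  have hRt : Rᵀ = R := by
    simp [hR, Matrix.transpose_add, Matrix.transpose_smul, hAt, hBt]
  have hSt : Sᵀ = S := by
    simp [hS, Matrix.transpose_sub, Matrix.transpose_smul, hAt, hBt]
  have hAR : A * R - B * S = R := by
    simp only [hR, hS, mul_add, mul_sub, Matrix.mul_smul, mul_one, hAA, h4]
    module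
  have hAS : A * S + B * R = -S := by
    simp only [hR, hS, mul_add, mul_sub, Matrix.mul_smul, mul_one, hAA, h4]
    module
  -- determinant of M is nonzero (via complexification)
  set N : Matrix (Fin n) (Fin n) ℂ := (z * u) • 1 + z • Cbar with hN
  have hNunit : IsUnit N := by
    have : N = z • (u • (1 : Matrix (Fin n) (Fin n) ℂ) + Cbar) := by
      simp [hN, smul_add, smul_smul]
    rw [this]
    rw [Matrix.isUnit_iff_isUnit_det, Matrix.det_smul, isUnit_iff_ne_zero]
    exact mul_ne_zero (pow_ne_zero _ hz0)
      (by simpa [isUnit_iff_ne_zero] using hudet.map (Matrix.detMonoidHom))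
  set N' : Matrix (Fin n) (Fin n) ℂ := z • 1 + (z * u) • Cc with hN'
  have hconjzu : (starRingEnd ℂ) (z * u) = z := by
    have hu1 : u * (starRingEnd ℂ) u = 1 := by
      rw [Complex.mul_conj]
      norm_cast
      rw [Complex.normSq_eq_norm_sq, huabs]; norm_num
    calc (starRingEnd ℂ) (z * u) = (z * u) * (starRingEnd ℂ) u := by rw [_root_.map_mul, hzu]
    _ = z * (u * (starRingEnd ℂ) u) := by ring
    _ = z := by rw [hu1, mul_one]
  have hmapadd : ∀ X Y : Matrix (Fin n) (Fin n) ℂ,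
      (X + Y).map (starRingEnd ℂ) = X.map (starRingEnd ℂ) + Y.map (starRingEnd ℂ) := by
    intro X Y; ext i j; simp [Matrix.map_apply]
  have hmapsmul : ∀ (c : ℂ) (X : Matrix (Fin n) (Fin n) ℂ),
      (c • X).map (starRingEnd ℂ) = (starRingEnd ℂ) c • X.map (starRingEnd ℂ) := by
    intro c X; ext i j; simp [Matrix.map_apply]
  have honemap : (1 : Matrix (Fin n) (Fin n) ℂ).map (starRingEnd ℂ) = 1 := by
    ext i j; simp [Matrix.map_apply, Matrix.one_apply, apply_ite (starRingEnd ℂ)]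
  have hCbarmap : Cbar.map (starRingEnd ℂ) = Cc := by
    ext i j
    simp [hCbar, hCc, Matrix.map_apply, Matrix.sub_apply, Matrix.add_apply, Matrix.smul_apply,
      hAc, hBc, Complex.conj_ofReal, smul_eq_mul, sub_eq_add_neg]
  have hN'c : N.map (starRingEnd ℂ) = N' := by
    calc N.map (starRingEnd ℂ)
        = ((starRingEnd ℂ) (z * u)) • (1 : Matrix (Fin n) (Fin n) ℂ).map (starRingEnd ℂ)
          + ((starRingEnd ℂ) z) • Cbar.map (starRingEnd ℂ) := by
          rw [hN, hmapadd, hmapsmul, hmapsmul]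
    _ = N' := by rw [honemap, hCbarmap, hconjzu, hzu, hN']
  have hN'unit : IsUnit N' := by
    rw [← hN'c]
    exact hNunit.map ((starRingEnd ℂ).mapMatrix)
  have hkey : N' * N = M.map Complex.ofReal := by
    have hmap : M.map Complex.ofReal =
        ((2 * (x * x + y * y) : ℝ) : ℂ) • 1 + ((2 * (x * x - y * y) : ℝ) : ℂ) • Ac
          + ((4 * (x * y) : ℝ) : ℂ) • Bc := by
      rw [hMval]
      ext i j
      simp only [Matrix.map_apply, Matrix.add_apply, Matrix.smul_apply, Matrix.one_apply, hAc,
        hBc, smul_eq_mul, Matrix.map_apply]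
      push_cast [apply_ite (Complex.ofReal)]
      ring
    have s1b : ((2 * (x * x + y * y) : ℝ) : ℂ) = z * (z * u) + z * (z * u) := by
      rw [show ((2 * (x * x + y * y) : ℝ) : ℂ)
          = ((x * x + y * y : ℝ) : ℂ) + ((x * x + y * y : ℝ) : ℂ) from by push_cast; ring, ← s1]
    rw [hmap, s1b, s2.symm, s3.symm]
    have expand : N' * N = (z * (z * u)) • 1 + (z * z) • Cbar + ((z * u) * (z * u)) • Cc
        + ((z * u) * z) • (Cc * Cbar) := by
      simp only [hN, hN', add_mul, mul_add, Matrix.smul_mul, Matrix.mul_smul, smul_smul,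
        mul_one, one_mul]
      module
    rw [expand, hCcCbar, hCbar, hCc]
    simp only [smul_add, smul_sub, smul_smul]
    module
  have hMdet : IsUnit M.det := by
    have h5 : IsUnit (M.map Complex.ofReal).det := by
      rw [← hkey]
      exact ((hN'unit.mul hNunit).map (Matrix.detMonoidHom))
    have h6 : Complex.ofRealHom M.det = (M.map Complex.ofReal).det :=
      RingHom.map_det Complex.ofRealHom M
    rw [isUnit_iff_ne_zero] at h5 ⊢
    intro h0
    rw [← h6] at h5
    simp [h0] at h5
  -- positive semidefinite square root
  have hMps : M.PosSemidef := by
    have h1' : (Rᴴ * R).PosSemidef := Matrix.posSemidef_conjTranspose_mul_self R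
    have h2' : (Sᴴ * S).PosSemidef := Matrix.posSemidef_conjTranspose_mul_self S
    have : M = Rᴴ * R + Sᴴ * S := by
      rw [hM, Matrix.conjTranspose_eq_transpose_of_trivial,
        Matrix.conjTranspose_eq_transpose_of_trivial, hRt, hSt]
    rw [this]
    exact h1'.add h2'
  have hMinv : M⁻¹.PosSemidef := hMps.inv
  set H : Matrix (Fin n) (Fin n) ℝ := (open scoped MatrixOrder in CFC.sqrt M⁻¹) with hH
  have hH2 : H * H = M⁻¹ := by
    open scoped MatrixOrder in exact CFC.sqrt_mul_sqrt_self _ hMinv.nonneg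
  have hHt : Hᵀ = H := by
    rw [← Matrix.conjTranspose_eq_transpose_of_trivial]
    open scoped MatrixOrder in exact (CFC.sqrt_nonneg M⁻¹).posSemidef.isHermitian
  have hHdet : IsUnit H.det := by
    have hMinvdet : IsUnit M⁻¹.det := by
      rw [Matrix.det_nonsing_inv, isUnit_ringInverse]
      exact hMdet
    have hprod : H.det * H.det = M⁻¹.det := by rw [← Matrix.det_mul, hH2]
    rw [← hprod] at hMinvdet
    exact isUnit_of_mul_isUnit_left hMinvdet
  have hHMH : H * M * H = 1 := by
    have hMinvinv : M = (M⁻¹)⁻¹ := (Matrix.nonsing_inv_nonsing_inv M hMdet).symm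
    rw [hMinvinv, ← hH2, Matrix.mul_inv_rev]
    rw [← mul_assoc, Matrix.mul_nonsing_inv H hHdet, one_mul, Matrix.nonsing_inv_mul H hHdet]
  -- the solution
  set P : Matrix (Fin n) (Fin n) ℝ := R * H with hP
  set Q : Matrix (Fin n) (Fin n) ℝ := S * H with hQ
  have hPt : Pᵀ = H * R := by rw [hP, Matrix.transpose_mul, hHt, hRt]
  have hQt : Qᵀ = H * S := by rw [hQ, Matrix.transpose_mul, hHt, hSt]
  have hPQ1 : Pᵀ * P + Qᵀ * Q = 1 := by
    rw [hPt, hQt, hP, hQ]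
    calc H * R * (R * H) + H * S * (S * H) = H * (R * R + S * S) * H := by noncomm_ring
    _ = 1 := by rw [← hM, hHMH]
  have hPQ2 : Pᵀ * Q = Qᵀ * P := by
    rw [hPt, hQt, hP, hQ]
    calc H * R * (S * H) = H * (R * S) * H := by noncomm_ring
    _ = H * (S * R) * H := by rw [hRS]
    _ = H * S * (R * H) := by noncomm_ring
  have hgP : A * P - B * Q = P := by
    rw [hP, hQ]
    calc A * (R * H) - B * (S * H) = (A * R - B * S) * H := by noncomm_ring
    _ = R * H := by rw [hAR]
  have hgQ : A * Q + B * P = -Q := by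
    rw [hP, hQ]
    calc A * (S * H) + B * (R * H) = (A * S + B * R) * H := by noncomm_ring
    _ = -(S * H) := by rw [hAS]; noncomm_ring
  refine ⟨P, Q, ?_, ?_⟩
  · simp only [Sp, Set.mem_setOf_eq, _root_.J, Matrix.fromBlocks_transpose,
      Matrix.fromBlocks_multiply, Matrix.neg_mul, Matrix.mul_neg, Matrix.transpose_neg, mul_one,
      one_mul, mul_zero, zero_mul, add_zero, zero_add, neg_neg, neg_zero]
    rw [Matrix.fromBlocks_inj]
    refine ⟨?_, ?_, ?_, ?_⟩
    · rw [hPQ2]; simp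
    · rw [add_comm]; exact hPQ1
    · rw [← neg_add, hPQ1]
    · rw [hPQ2]; simp
  · have hδl : (fromBlocks P Q (-Q) P)ᵀ * (fromBlocks P Q (-Q) P) = 1 := by
      simp only [Matrix.fromBlocks_transpose, Matrix.fromBlocks_multiply, Matrix.transpose_neg,
        Matrix.neg_mul, Matrix.mul_neg, neg_neg, ← Matrix.fromBlocks_one]
      rw [Matrix.fromBlocks_inj]
      refine ⟨?_, ?_, ?_, ?_⟩
      · exact hPQ1
      · rw [hPQ2]; simp
      · rw [hPQ2]; simp
      · rw [add_comm]; exact hPQ1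
    have hδdet : IsUnit (fromBlocks P Q (-Q) P).det := by
      have h7 := congrArg Matrix.det hδl
      rw [Matrix.det_mul, Matrix.det_one] at h7
      exact IsUnit.of_mul_eq_one _ (by rw [mul_comm] at h7; exact h7)
    have hτδ : tau (fromBlocks P Q (-Q) P) = fromBlocks A B (-B) A * fromBlocks P Q (-Q) P := by
      simp only [tau, Iminus, Matrix.fromBlocks_multiply, Matrix.neg_mul, Matrix.mul_neg, mul_one,
        one_mul, mul_zero, zero_mul, add_zero, zero_add, neg_neg, neg_zero]
      rw [Matrix.fromBlocks_inj]
      refine ⟨?_, ?_, ?_, ?_⟩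
      · rw [← sub_eq_add_neg]; exact hgP.symm
      · exact hgQ.symm
      · rw [← neg_add, add_comm (B * P) (A * Q), hgQ, neg_neg]
      · rw [add_comm, ← sub_eq_add_neg]; exact hgP.symm
    calc fromBlocks A B (-B) A
        = fromBlocks A B (-B) A * (fromBlocks P Q (-Q) P * (fromBlocks P Q (-Q) P)⁻¹) := by
          rw [Matrix.mul_nonsing_inv _ hδdet, mul_one]
    _ = tau (fromBlocks P Q (-Q) P) * (fromBlocks P Q (-Q) P)⁻¹ := by
        rw [← mul_assoc, ← hτδ]
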